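/- Let X and Y be octahedral Banach spaces and 1 < p < ∞. Then X ⊕_p Y (the direct sum equipped with the norm ‖(x,y)‖ = (‖x‖^p + ‖y‖^p)^{1/p}) is 2^{1−1/p}-average rough. -/

import Mathlib

open Filter Topology ENNReal

noncomputable section

/-- A Banach space `X` is `δ`-average rough if for every finite family of unit vectors
`x₁, …, xₙ`, one has `limsup_{‖y‖→0} (1/n) ∑ᵢ (‖xᵢ+y‖+‖xᵢ-y‖-2)/‖y‖ ≥ δ`. -/
def AverageRough (X : Type*) [NormedAddCommGroup X] [NormedSpace ℝ X] (δ : ℝ) : Prop :=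
  ∀ n : ℕ, 0 < n → ∀ x : Fin n → X, (∀ i, ‖x i‖ = 1) →
    δ ≤ Filter.limsup
      (fun y : X => (1 / (n : ℝ)) * ∑ i, (‖x i + y‖ + ‖x i - y‖ - 2) / ‖y‖) (𝓝[≠] 0)

/-- A Banach space `X` is octahedral if for every finite-dimensional subspace `E` of `X`
and every `ε > 0` there is a norm-one `y ∈ X` with `‖x + y‖ ≥ (1-ε)(‖x‖+‖y‖)` for all
`x ∈ E`. -/
def Octahedral (X : Type*) [NormedAddCommGroup X] [NormedSpace ℝ X] : Prop :=
  ∀ E : Subspace ℝ X, FiniteDimensional ℝ E → ∀ ε > (0 : ℝ), ∃ y : X, ‖y‖ = 1 ∧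
    ∀ x ∈ E, (1 - ε) * (‖x‖ + ‖y‖) ≤ ‖x + y‖

lemma key_ineq {P : ℝ} (hP : 1 < P) {A B t : ℝ} (hA : 0 ≤ A) (hB : 0 ≤ B) (ht : 0 ≤ t)
    (hAB : A ^ P + B ^ P = 1) : 1 + t ≤ ((A + t) ^ P + (B + t) ^ P) ^ (1 / P) := by
  have hpq := Real.HolderConjugate.conjExponent hP
  set q := Real.conjExponent P with hq
  have hmul : ∀ a : ℝ, 0 ≤ a → a * a ^ (P - 1) = a ^ P := by
    intro a ha
    nth_rewrite 1 [← Real.rpow_one a]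
    rw [← Real.rpow_add' ha (by simp; linarith)]
    ring_nf
  have hcq : ∀ a : ℝ, 0 ≤ a → (a ^ (P - 1)) ^ q = a ^ P := by
    intro a ha
    rw [← Real.rpow_mul ha, hpq.sub_one_mul_conj]
  have hge : ∀ a : ℝ, 0 ≤ a → a ≤ 1 → a ^ P ≤ a ^ (P - 1) := by
    intro a ha ha1
    rcases eq_or_lt_of_le ha with h | h
    · rw [← h, Real.zero_rpow (by linarith), Real.zero_rpow (by linarith)]
    · exact Real.rpow_le_rpow_of_exponent_ge h ha1 (by linarith)
  have hA1 : A ≤ 1 := by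
    by_contra h
    push_neg at h
    have : (1:ℝ) ^ P < A ^ P := Real.rpow_lt_rpow (by norm_num) h (by linarith)
    rw [Real.one_rpow] at this
    nlinarith [Real.rpow_nonneg hB P]
  have hB1 : B ≤ 1 := by
    by_contra h
    push_neg at h
    have : (1:ℝ) ^ P < B ^ P := Real.rpow_lt_rpow (by norm_num) h (by linarith)
    rw [Real.one_rpow] at this
    nlinarith [Real.rpow_nonneg hA P]
  have hsum : A ^ (P-1) + B ^ (P-1) ≥ 1 := by
    have := hge A hA hA1
    have := hge B hB hB1
    linarith
  have holder := Real.inner_le_Lp_mul_Lq_of_nonneg (s := (Finset.univ : Finset (Fin 2)))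
    (f := ![A + t, B + t]) (g := ![A ^ (P-1), B ^ (P-1)]) hpq
    (by intro i _; fin_cases i <;> simp <;> [linarith; linarith])
    (by intro i _; fin_cases i <;> simp [Real.rpow_nonneg hA, Real.rpow_nonneg hB])
  simp only [Fin.sum_univ_two, Matrix.cons_val_zero, Matrix.cons_val_one, Matrix.head_cons]
    at holder
  rw [hcq A hA, hcq B hB, hAB, Real.one_rpow, mul_one] at holder
  have expand : (A + t) * A ^ (P-1) + (B + t) * B ^ (P-1)
      = (A ^ P + B ^ P) + t * (A ^ (P-1) + B ^ (P-1)) := by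
    rw [← hmul A hA, ← hmul B hB]; ring
  rw [expand, hAB] at holder
  nlinarith

/-- From octahedrality data, bounds for `u ± t • a`. -/
lemma oct_bound {X : Type*} [NormedAddCommGroup X] [NormedSpace ℝ X] {ε t : ℝ} (ht : 0 < t)
    {E : Submodule ℝ X} {a : X} (ha1 : ‖a‖ = 1)
    (ha : ∀ x ∈ E, (1 - ε) * (‖x‖ + ‖a‖) ≤ ‖x + a‖) {u : X} (hu : u ∈ E) :
    (1 - ε) * (‖u‖ + t) ≤ ‖u + t • a‖ ∧ (1 - ε) * (‖u‖ + t) ≤ ‖u - t • a‖ := by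
  have hnormt : ‖(t:ℝ)⁻¹‖ = t⁻¹ := Real.norm_of_nonneg (by positivity)
  constructor
  · have h := ha (t⁻¹ • u) (Submodule.smul_mem _ _ hu)
    rw [ha1, norm_smul, hnormt] at h
    have hsc : t * ‖t⁻¹ • u + a‖ = ‖u + t • a‖ := by
      nth_rewrite 1 [← Real.norm_of_nonneg ht.le]
      rw [← norm_smul, smul_add, smul_smul, mul_inv_cancel₀ ht.ne', one_smul]
    have h2 := mul_le_mul_of_nonneg_left h ht.le
    rw [hsc] at h2
    calc (1 - ε) * (‖u‖ + t) = t * ((1 - ε) * (t⁻¹ * ‖u‖ + 1)) := by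
          field_simp
      _ ≤ ‖u + t • a‖ := h2
  · have h := ha (-(t⁻¹ • u)) (Submodule.neg_mem _ (Submodule.smul_mem _ _ hu))
    rw [ha1, norm_neg, norm_smul, hnormt] at h
    have hsc : t * ‖-(t⁻¹ • u) + a‖ = ‖u - t • a‖ := by
      nth_rewrite 1 [← Real.norm_of_nonneg ht.le]
      rw [← norm_smul, smul_add, smul_neg, smul_smul, mul_inv_cancel₀ ht.ne', one_smul,
        ← norm_neg]
      congr 1
      abel
    have h2 := mul_le_mul_of_nonneg_left h ht.le
    rw [hsc] at h2
    calc (1 - ε) * (‖u‖ + t) = t * ((1 - ε) * (t⁻¹ * ‖u‖ + 1)) := by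
          field_simp
      _ ≤ ‖u - t • a‖ := h2

set_option maxHeartbeats 1000000 in
/-- If `X` and `Y` are octahedral and `1 < p < ∞`, then `X ⊕_p Y` is
`2^{1-1/p}`-average rough. -/
theorem averageRough_prod_lp_of_octahedral (X Y : Type*)
    [NormedAddCommGroup X] [NormedSpace ℝ X] [CompleteSpace X]
    [NormedAddCommGroup Y] [NormedSpace ℝ Y] [CompleteSpace Y]
    (p : ℝ≥0∞) [Fact (1 ≤ p)] (hp : 1 < p) (hp' : p ≠ ⊤)
    (hX : Octahedral X) (hY : Octahedral Y) :
    AverageRough (WithLp p (X × Y)) ((2 : ℝ) ^ ((1 : ℝ) - 1 / p.toReal)) := by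
  have hP1 : 1 < p.toReal := by
    rw [← ENNReal.toReal_one]
    exact (ENNReal.toReal_lt_toReal ENNReal.one_ne_top hp').mpr hp
  set P := p.toReal with hPdef
  have hP0 : 0 < P := by linarith
  have h2P : (0:ℝ) < (2:ℝ) ^ ((1:ℝ)/P) := Real.rpow_pos_of_pos two_pos _
  have h2P1 : (1:ℝ) ≤ (2:ℝ) ^ ((1:ℝ)/P) := Real.one_le_rpow one_le_two (by positivity)
  have hδ2 : ((2:ℝ) ^ ((1:ℝ) - 1/P)) * 2 ^ ((1:ℝ)/P) = 2 := by
    rw [← Real.rpow_add two_pos]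
    norm_num
  intro n hn x hx
  set δ : ℝ := (2:ℝ) ^ ((1:ℝ) - 1/P) with hδdef
  have hn' : (0:ℝ) < (n:ℝ) := by exact_mod_cast hn
  -- norms of the components
  have hxnorm : ∀ i, ‖(x i).fst‖ ^ P + ‖(x i).snd‖ ^ P = 1 := by
    intro i
    have h := WithLp.prod_norm_eq_add (p := p) hP0 (x i)
    rw [hx i] at h
    have hnn : (0:ℝ) ≤ ‖(x i).fst‖ ^ P + ‖(x i).snd‖ ^ P := by positivity
    have h2 : ((‖(x i).fst‖ ^ P + ‖(x i).snd‖ ^ P) ^ ((P:ℝ)⁻¹)) ^ P = 1 ^ P := by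
      rw [← one_div, ← h, Real.one_rpow]
    rwa [Real.rpow_inv_rpow hnn hP0.ne', Real.one_rpow] at h2
  -- boundedness
  have hbdd : IsBoundedUnder (· ≤ ·) (𝓝[≠] (0 : WithLp p (X × Y)))
      (fun y : WithLp p (X × Y) => (1 / (n : ℝ)) * ∑ i, (‖x i + y‖ + ‖x i - y‖ - 2) / ‖y‖) := by
    refine isBoundedUnder_of ⟨2, fun y => ?_⟩
    have hterm : ∀ i, (‖x i + y‖ + ‖x i - y‖ - 2) / ‖y‖ ≤ 2 := by
      intro i
      rcases eq_or_ne y 0 with rfl | hy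
      · simp [hx i]
      · have hy' : (0:ℝ) < ‖y‖ := norm_pos_iff.mpr hy
        rw [div_le_iff₀ hy']
        have h1 := norm_add_le (x i) y
        have h2 := norm_sub_le (x i) y
        rw [hx i] at h1 h2
        linarith
    calc (1 / (n : ℝ)) * ∑ i, (‖x i + y‖ + ‖x i - y‖ - 2) / ‖y‖
        ≤ (1 / (n:ℝ)) * ∑ _i : Fin n, (2:ℝ) :=
          mul_le_mul_of_nonneg_left (Finset.sum_le_sum fun i _ => hterm i) (by positivity)
      _ = 2 := by
          rw [Finset.sum_const, Finset.card_univ, Fintype.card_fin, nsmul_eq_mul]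
          field_simp
  refine le_of_forall_sub_le fun η hη => ?_
  refine le_limsup_of_frequently_le ?_ hbdd
  rw [(Metric.nhdsWithin_basis_ball).frequently_iff]
  intro r hr
  set t : ℝ := min 1 (r / (2 * 2 ^ ((1:ℝ)/P))) with htdef
  have ht : 0 < t := lt_min one_pos (div_pos hr (by positivity))
  have ht1 : t ≤ 1 := min_le_left _ _
  set ε : ℝ := min (η * t / 4) (1/2) with hεdef
  have hε : 0 < ε := lt_min (by positivity) (by norm_num)
  have hε2 : ε ≤ 1/2 := min_le_right _ _
  have hεt : ε ≤ η * t / 4 := min_le_left _ _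
  have hε1 : (0:ℝ) ≤ 1 - ε := by linarith
  obtain ⟨a, ha1, ha⟩ := hX (Submodule.span ℝ (Set.range fun i => (x i).fst))
    (FiniteDimensional.span_of_finite ℝ (Set.finite_range _)) ε hε
  obtain ⟨b, hb1, hb⟩ := hY (Submodule.span ℝ (Set.range fun i => (x i).snd))
    (FiniteDimensional.span_of_finite ℝ (Set.finite_range _)) ε hε
  set w : WithLp p (X × Y) := (WithLp.equiv p (X × Y)).symm (t • a, t • b) with hwdef
  have hwnorm : ‖w‖ = 2 ^ ((1:ℝ)/P) * t := by
    rw [WithLp.prod_norm_eq_add (p := p) hP0]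
    show (‖t • a‖ ^ P + ‖t • b‖ ^ P) ^ (1/P) = _
    rw [norm_smul, norm_smul, ha1, hb1, mul_one, Real.norm_of_nonneg ht.le,
      ← two_mul, Real.mul_rpow (by norm_num) (Real.rpow_nonneg ht.le P)]
    congr 1
    rw [← Real.rpow_mul ht.le, mul_one_div_cancel hP0.ne', Real.rpow_one]
  have hwr : ‖w‖ < r := by
    rw [hwnorm]
    calc 2 ^ ((1:ℝ)/P) * t ≤ 2 ^ ((1:ℝ)/P) * (r / (2 * 2 ^ ((1:ℝ)/P))) :=
          mul_le_mul_of_nonneg_left (min_le_right _ _) h2P.le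
      _ = r / 2 := by field_simp
      _ < r := by linarith
  have hw0 : w ≠ 0 := by
    intro h
    rw [h, norm_zero] at hwnorm
    nlinarith
  have hterm : ∀ i, δ - η ≤ (‖x i + w‖ + ‖x i - w‖ - 2) / ‖w‖ := by
    intro i
    set A := ‖(x i).fst‖ with hAdef
    set B := ‖(x i).snd‖ with hBdef
    have hA : (0:ℝ) ≤ A := norm_nonneg _
    have hB : (0:ℝ) ≤ B := norm_nonneg _
    have hAB := hxnorm i
    have hfst := oct_bound ht ha1 ha (Submodule.subset_span ⟨i, rfl⟩)
    have hsnd := oct_bound ht hb1 hb (Submodule.subset_span ⟨i, rfl⟩)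
    -- norm lower bounds
    have hkey := key_ineq hP1 hA hB ht.le hAB
    have main : ∀ z : WithLp p (X × Y),
        (1-ε)*(A+t) ≤ ‖z.fst‖ → (1-ε)*(B+t) ≤ ‖z.snd‖ → (1-ε)*(1+t) ≤ ‖z‖ := by
      intro z h1 h2
      rw [WithLp.prod_norm_eq_add (p := p) hP0]
      calc (1-ε)*(1+t) ≤ (1-ε)*((A+t)^P + (B+t)^P)^(1/P) :=
            mul_le_mul_of_nonneg_left hkey hε1
        _ = ((1-ε)^P * ((A+t)^P + (B+t)^P))^(1/P) := by
            rw [Real.mul_rpow (Real.rpow_nonneg hε1 P) (by positivity),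
              ← Real.rpow_mul hε1, mul_one_div_cancel hP0.ne', Real.rpow_one]
        _ = (((1-ε)*(A+t))^P + ((1-ε)*(B+t))^P)^(1/P) := by
            rw [mul_add, ← Real.mul_rpow hε1 (by positivity),
              ← Real.mul_rpow hε1 (by positivity)]
        _ ≤ (‖z.fst‖^P + ‖z.snd‖^P)^(1/P) := by
            apply Real.rpow_le_rpow (by positivity) _ (by positivity)
            have e1 : ((1-ε)*(A+t))^P ≤ ‖z.fst‖^P :=
              Real.rpow_le_rpow (by positivity) h1 hP0.le
            have e2 : ((1-ε)*(B+t))^P ≤ ‖z.snd‖^P :=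
              Real.rpow_le_rpow (by positivity) h2 hP0.le
            linarith
    have hplus : (1-ε)*(1+t) ≤ ‖x i + w‖ := main _ hfst.1 hsnd.1
    have hminus : (1-ε)*(1+t) ≤ ‖x i - w‖ := main _ hfst.2 hsnd.2
    rw [hwnorm, le_div_iff₀ (by positivity)]
    have hηt : (0:ℝ) ≤ η * t := by positivity
    nlinarith [hδ2]
  refine ⟨w, ⟨?_, ?_⟩, ?_⟩
  · rw [Metric.mem_ball, dist_zero_right]; exact hwr
  · simpa using hw0
  · calc δ - η = (1/(n:ℝ)) * ∑ _i : Fin n, (δ - η) := by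
          rw [Finset.sum_const, Finset.card_univ, Fintype.card_fin, nsmul_eq_mul]
          field_simp
      _ ≤ _ := mul_le_mul_of_nonneg_left (Finset.sum_le_sum fun i _ => hterm i) (by positivity)
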